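/- Let (Ω, μ) be a probability space, λ > 0, and let k : Ω → ℝ^m and l : Ω → ℝ^p be bounded measurable feature maps. Let Σ_k = ∫ k k ᵀ dμ and Σ_l = ∫ l lᵀ dμ. Then ∫∫ ( k(x)ᵀ(Σ_k+λI)⁻¹k(x') − l(x)ᵀ(Σ_l+λI)⁻¹l(x') )² dμ(x) dμ(x') = 0 if and only if ⟨k(x), k(x')⟩ = ⟨l(x), l(x')⟩ for μ⊗μ-almost every (x, x'). That is, the UKP distance between the two representations vanishes if and only if the associated kernels K_φ(x,x') = ⟨k(x),k(x')⟩ and K_ψ(x,x') = ⟨l(x),l(x')⟩ agree almost everywhere. -/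

import Mathlib

open MeasureTheory Matrix
open scoped RealInnerProductSpace

set_option linter.unusedSectionVars false

private lemma conjT_eq_transpose {n q : Type*} (A : Matrix n q ℝ) : Aᴴ = Aᵀ := by
  ext i j; simp [conjTranspose_apply]

private lemma smul_one_posDef {r : Type*} [Fintype r] [DecidableEq r]
    {lam : ℝ} (hlam : 0 < lam) : ((lam • 1 : Matrix r r ℝ)).PosDef := by
  rw [smul_one_eq_diagonal]
  exact posDef_diagonal_iff.mpr fun _ => hlam

private lemma reg_identity {N q : Type*} [Fintype N] [Fintype q] [DecidableEq N] [DecidableEq q]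
    (lam : ℝ) (hlam : 0 < lam) (U : Matrix N q ℝ) :
    U * (Uᵀ * U + lam • 1)⁻¹ * Uᵀ = 1 - lam • (U * Uᵀ + lam • 1)⁻¹ := by
  have hSpsd : (Uᵀ * U).PosSemidef := by
    rw [← conjT_eq_transpose]; exact posSemidef_conjTranspose_mul_self U
  have hTpsd : (U * Uᵀ).PosSemidef := by
    rw [← conjT_eq_transpose]; exact posSemidef_self_mul_conjTranspose U
  have hSpd : (Uᵀ * U + lam • 1).PosDef := Matrix.PosDef.posSemidef_add hSpsd (smul_one_posDef hlam)
  have hTpd : (U * Uᵀ + lam • 1).PosDef := Matrix.PosDef.posSemidef_add hTpsd (smul_one_posDef hlam)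
  have hSdet : IsUnit (Uᵀ * U + lam • 1).det := hSpd.det_pos.ne'.isUnit
  have hTdet : IsUnit (U * Uᵀ + lam • 1).det := hTpd.det_pos.ne'.isUnit
  have key : (U * Uᵀ + lam • 1) * U = U * (Uᵀ * U + lam • 1) := by
    rw [Matrix.add_mul, Matrix.mul_add, Matrix.smul_mul, Matrix.mul_smul, Matrix.one_mul,
      Matrix.mul_one, Matrix.mul_assoc]
  have inner : (U * Uᵀ + lam • 1) * (U * (Uᵀ * U + lam • 1)⁻¹) = U := by
    rw [← Matrix.mul_assoc, key, Matrix.mul_assoc, mul_nonsing_inv _ hSdet, Matrix.mul_one]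
  have push : U * (Uᵀ * U + lam • 1)⁻¹ = (U * Uᵀ + lam • 1)⁻¹ * U := by
    calc U * (Uᵀ * U + lam • 1)⁻¹
        = (U * Uᵀ + lam • 1)⁻¹ * ((U * Uᵀ + lam • 1) * (U * (Uᵀ * U + lam • 1)⁻¹)) := by
          rw [← Matrix.mul_assoc, nonsing_inv_mul _ hTdet, Matrix.one_mul]
      _ = (U * Uᵀ + lam • 1)⁻¹ * U := by rw [inner]
  rw [push, Matrix.mul_assoc]
  have hsub : U * Uᵀ = (U * Uᵀ + lam • 1) - lam • 1 := (add_sub_cancel_right _ _).symm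
  have final : (U * Uᵀ + lam • 1)⁻¹ * (U * Uᵀ) + lam • (U * Uᵀ + lam • 1)⁻¹ = 1 := by
    calc (U * Uᵀ + lam • 1)⁻¹ * (U * Uᵀ) + lam • (U * Uᵀ + lam • 1)⁻¹
        = (U * Uᵀ + lam • 1)⁻¹ * (U * Uᵀ) + (U * Uᵀ + lam • 1)⁻¹ * (lam • 1) := by
          rw [Matrix.mul_smul, Matrix.mul_one]
      _ = (U * Uᵀ + lam • 1)⁻¹ * (U * Uᵀ + lam • 1) := (Matrix.mul_add _ _ _).symm
      _ = 1 := nonsing_inv_mul _ hTdet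
  exact eq_sub_of_add_eq final

open scoped MatrixOrder in
private lemma matrix_key {m p : ℕ} (lam : ℝ) (hlam : 0 < lam)
    (G : Matrix (Fin m ⊕ Fin p) (Fin m ⊕ Fin p) ℝ) (hG : G.PosSemidef)
    (Sk : Matrix (Fin m) (Fin m) ℝ) (Sl : Matrix (Fin p) (Fin p) ℝ)
    (hSk : ∀ i j, Sk i j = G (Sum.inl i) (Sum.inl j))
    (hSl : ∀ i j, Sl i j = G (Sum.inr i) (Sum.inr j)) :
    G * fromBlocks (Sk + lam • 1)⁻¹ 0 0 (-(Sl + lam • 1)⁻¹) * G = 0 ↔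
    G * fromBlocks 1 0 0 (-1) * G = 0 := by
  set Φ := CFC.sqrt G with hΦdef
  have hΦΦ : Φ * Φ = G := CFC.sqrt_mul_sqrt_self G hG.nonneg
  have hΦH : Φᴴ = Φ := (CFC.sqrt_nonneg G).posSemidef.isHermitian
  have hΦT : Φᵀ = Φ := by rw [← conjT_eq_transpose]; exact hΦH
  set U : Matrix (Fin m ⊕ Fin p) (Fin m) ℝ := Φ.submatrix id Sum.inl with hU
  set V : Matrix (Fin m ⊕ Fin p) (Fin p) ℝ := Φ.submatrix id Sum.inr with hV
  have hΦsymm : ∀ a b, Φ a b = Φ b a := by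
    intro a b
    conv_lhs => rw [← hΦT]
    rfl
  have hUcol : Φ = fromCols U V := by
    ext a b; cases b <;> rfl
  have hUrow : Φ = fromRows Uᵀ Vᵀ := by
    ext a b
    cases a with
    | inl i => rw [fromRows_apply_inl, transpose_apply, hU]; exact hΦsymm _ _
    | inr i => rw [fromRows_apply_inr, transpose_apply, hV]; exact hΦsymm _ _
  have hblk : ∀ (D₁ : Matrix (Fin m) (Fin m) ℝ) (D₂ : Matrix (Fin p) (Fin p) ℝ),
      Φ * fromBlocks D₁ 0 0 D₂ * Φ = U * D₁ * Uᵀ + V * D₂ * Vᵀ := by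
    intro D₁ D₂
    calc Φ * fromBlocks D₁ 0 0 D₂ * Φ
        = (fromCols U V * fromBlocks D₁ 0 0 D₂) * fromRows Uᵀ Vᵀ := by
          rw [← hUcol, ← hUrow]
      _ = U * D₁ * Uᵀ + V * D₂ * Vᵀ := by
          rw [fromCols_mul_fromBlocks, fromCols_mul_fromRows]
          simp
  have hGMG : ∀ (M : Matrix (Fin m ⊕ Fin p) (Fin m ⊕ Fin p) ℝ),
      G * M * G = 0 ↔ Φ * M * Φ = 0 := by
    intro M
    constructor
    · intro h
      rw [← hΦΦ] at h
      have h1 : (Φᴴ * Φ) * (M * (Φ * Φᴴ)) = 0 := by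
        rw [hΦH]
        calc Φ * Φ * (M * (Φ * Φ)) = Φ * Φ * M * (Φ * Φ) := by
              rw [Matrix.mul_assoc (Φ * Φ) M]
          _ = 0 := h
      have h2 : Φ * (M * (Φ * Φᴴ)) = 0 := (conjTranspose_mul_self_mul_eq_zero Φ _).mp h1
      have h3 : (Φ * M) * (Φ * Φᴴ) = 0 := by rw [Matrix.mul_assoc]; exact h2
      exact (mul_self_mul_conjTranspose_eq_zero Φ _).mp h3
    · intro h
      rw [← hΦΦ]
      calc Φ * Φ * M * (Φ * Φ) = Φ * (Φ * M * Φ) * Φ := by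
            simp only [Matrix.mul_assoc]
        _ = 0 := by rw [h, Matrix.mul_zero, Matrix.zero_mul]
  have hUtU : Uᵀ * U = Sk := by
    ext i j
    rw [hSk, ← hΦΦ]
    simp only [Matrix.mul_apply, transpose_apply, hU, submatrix_apply, id]
    exact Finset.sum_congr rfl fun a _ => by rw [hΦsymm a (Sum.inl i)]
  have hVtV : Vᵀ * V = Sl := by
    ext i j
    rw [hSl, ← hΦΦ]
    simp only [Matrix.mul_apply, transpose_apply, hV, submatrix_apply, id]
    exact Finset.sum_congr rfl fun a _ => by rw [hΦsymm a (Sum.inr i)]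
  have e1 : U * (Sk + lam • 1)⁻¹ * Uᵀ = 1 - lam • (U * Uᵀ + lam • 1)⁻¹ := by
    rw [← hUtU]; exact reg_identity lam hlam U
  have e2 : V * (Sl + lam • 1)⁻¹ * Vᵀ = 1 - lam • (V * Vᵀ + lam • 1)⁻¹ := by
    rw [← hVtV]; exact reg_identity lam hlam V
  have hTkdet : IsUnit (U * Uᵀ + lam • 1).det := by
    have hTpsd : (U * Uᵀ).PosSemidef := by
      rw [← conjT_eq_transpose]; exact posSemidef_self_mul_conjTranspose U
    exact (Matrix.PosDef.posSemidef_add hTpsd (smul_one_posDef hlam)).det_pos.ne'.isUnit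
  have hTldet : IsUnit (V * Vᵀ + lam • 1).det := by
    have hTpsd : (V * Vᵀ).PosSemidef := by
      rw [← conjT_eq_transpose]; exact posSemidef_self_mul_conjTranspose V
    exact (Matrix.PosDef.posSemidef_add hTpsd (smul_one_posDef hlam)).det_pos.ne'.isUnit
  rw [hGMG, hGMG, hblk, hblk, Matrix.mul_neg, Matrix.neg_mul, Matrix.mul_neg, Matrix.neg_mul,
    Matrix.mul_one, Matrix.mul_one, e1, e2, add_neg_eq_zero, add_neg_eq_zero]
  constructor
  · intro h
    have h6 := sub_right_injective h
    have h7 : (U * Uᵀ + lam • 1)⁻¹ = (V * Vᵀ + lam • 1)⁻¹ :=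
      smul_right_injective _ hlam.ne' h6
    have h8 : ((U * Uᵀ + lam • 1)⁻¹)⁻¹ = ((V * Vᵀ + lam • 1)⁻¹)⁻¹ := by rw [h7]
    rw [nonsing_inv_nonsing_inv _ hTkdet, nonsing_inv_nonsing_inv _ hTldet] at h8
    exact add_right_cancel h8
  · intro h
    rw [h]


section analytic

variable {Ω : Type*} [MeasurableSpace Ω] {μ : Measure Ω} [IsProbabilityMeasure μ]
variable {n : Type*} [Fintype n] [DecidableEq n]
variable {φ : Ω → n → ℝ} {C : ℝ}

private lemma int_mul (hmeas : ∀ i, Measurable fun x => φ x i)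
    (hbd : ∀ x i, |φ x i| ≤ C) (i r : n) :
    Integrable (fun x => φ x i * φ x r) μ := by
  have hm : Measurable fun x => φ x i * φ x r := (hmeas i).mul (hmeas r)
  refine (integrable_const (C * C)).mono' hm.aestronglyMeasurable (ae_of_all _ fun x => ?_)
  have h0 : (0:ℝ) ≤ C := le_trans (abs_nonneg _) (hbd x i)
  calc ‖φ x i * φ x r‖ = |φ x i| * |φ x r| := by rw [Real.norm_eq_abs, abs_mul]
    _ ≤ C * C := mul_le_mul (hbd x i) (hbd x r) (abs_nonneg _) h0

private lemma dv_expand (A : Matrix n n ℝ) (v w : n → ℝ) :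
    v ⬝ᵥ A.mulVec w = ∑ t : n × n, v t.1 * A t.1 t.2 * w t.2 := by
  rw [Fintype.sum_prod_type]
  simp only [dotProduct, mulVec, Finset.mul_sum, mul_assoc]

private lemma master (hmeas : ∀ i, Measurable fun x => φ x i)
    (hbd : ∀ x i, |φ x i| ≤ C) (G : Matrix n n ℝ)
    (hG : ∀ i j, G i j = ∫ x, φ x i * φ x j ∂μ) (A B : Matrix n n ℝ) :
    ∫ q, (φ q.1 ⬝ᵥ A.mulVec (φ q.2)) * (φ q.1 ⬝ᵥ B.mulVec (φ q.2)) ∂(μ.prod μ)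
      = ∑ v : (n × n) × (n × n),
          A v.1.1 v.1.2 * B v.2.1 v.2.2 * (G v.1.1 v.2.1 * G v.1.2 v.2.2) := by
  have expand : ∀ q : Ω × Ω,
      (φ q.1 ⬝ᵥ A.mulVec (φ q.2)) * (φ q.1 ⬝ᵥ B.mulVec (φ q.2))
        = ∑ v : (n × n) × (n × n), A v.1.1 v.1.2 * B v.2.1 v.2.2 *
            ((φ q.1 v.1.1 * φ q.1 v.2.1) * (φ q.2 v.1.2 * φ q.2 v.2.2)) := by
    intro q
    rw [dv_expand A (φ q.1) (φ q.2), dv_expand B (φ q.1) (φ q.2),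
      Finset.sum_mul_sum Finset.univ Finset.univ
        (fun t : n × n => φ q.1 t.1 * A t.1 t.2 * φ q.2 t.2)
        (fun u : n × n => φ q.1 u.1 * B u.1 u.2 * φ q.2 u.2)]
    conv_rhs => rw [Fintype.sum_prod_type]
    refine Finset.sum_congr rfl fun t _ => Finset.sum_congr rfl fun u _ => ?_
    ring
  have hint : ∀ v : (n × n) × (n × n),
      Integrable (fun q : Ω × Ω => A v.1.1 v.1.2 * B v.2.1 v.2.2 *
        ((φ q.1 v.1.1 * φ q.1 v.2.1) * (φ q.2 v.1.2 * φ q.2 v.2.2))) (μ.prod μ) := by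
    intro v
    exact (((int_mul hmeas hbd v.1.1 v.2.1).mul_prod (int_mul hmeas hbd v.1.2 v.2.2))).const_mul _
  calc ∫ q, (φ q.1 ⬝ᵥ A.mulVec (φ q.2)) * (φ q.1 ⬝ᵥ B.mulVec (φ q.2)) ∂(μ.prod μ)
      = ∫ q, ∑ v : (n × n) × (n × n), A v.1.1 v.1.2 * B v.2.1 v.2.2 *
          ((φ q.1 v.1.1 * φ q.1 v.2.1) * (φ q.2 v.1.2 * φ q.2 v.2.2)) ∂(μ.prod μ) := by
        exact integral_congr_ae (ae_of_all _ expand)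
    _ = ∑ v : (n × n) × (n × n), ∫ q : Ω × Ω, A v.1.1 v.1.2 * B v.2.1 v.2.2 *
          ((φ q.1 v.1.1 * φ q.1 v.2.1) * (φ q.2 v.1.2 * φ q.2 v.2.2)) ∂(μ.prod μ) := by
        exact integral_finset_sum _ fun v _ => hint v
    _ = ∑ v : (n × n) × (n × n),
          A v.1.1 v.1.2 * B v.2.1 v.2.2 * (G v.1.1 v.2.1 * G v.1.2 v.2.2) := by
        refine Finset.sum_congr rfl fun v _ => ?_
        rw [integral_const_mul,
          integral_prod_mul (fun x => φ x v.1.1 * φ x v.2.1) (fun x => φ x v.1.2 * φ x v.2.2),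
          hG v.1.1 v.2.1, hG v.1.2 v.2.2]

private lemma measurable_hM (hmeas : ∀ i, Measurable fun x => φ x i) (M : Matrix n n ℝ) :
    Measurable fun q : Ω × Ω => φ q.1 ⬝ᵥ M.mulVec (φ q.2) := by
  have : ∀ q : Ω × Ω, φ q.1 ⬝ᵥ M.mulVec (φ q.2)
      = ∑ t : n × n, φ q.1 t.1 * M t.1 t.2 * φ q.2 t.2 := fun q => dv_expand M _ _
  simp only [this]
  refine Finset.measurable_sum _ fun t _ => ?_
  exact (((hmeas t.1).comp measurable_fst).mul_const _).mul ((hmeas t.2).comp measurable_snd)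


private lemma expand_prod (A B : Matrix n n ℝ) (q : Ω × Ω) :
    (φ q.1 ⬝ᵥ A.mulVec (φ q.2)) * (φ q.1 ⬝ᵥ B.mulVec (φ q.2))
      = ∑ v : (n × n) × (n × n), A v.1.1 v.1.2 * B v.2.1 v.2.2 *
          ((φ q.1 v.1.1 * φ q.1 v.2.1) * (φ q.2 v.1.2 * φ q.2 v.2.2)) := by
  rw [dv_expand A (φ q.1) (φ q.2), dv_expand B (φ q.1) (φ q.2),
    Finset.sum_mul_sum Finset.univ Finset.univ
      (fun t : n × n => φ q.1 t.1 * A t.1 t.2 * φ q.2 t.2)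
      (fun u : n × n => φ q.1 u.1 * B u.1 u.2 * φ q.2 u.2)]
  conv_rhs => rw [Fintype.sum_prod_type]
  refine Finset.sum_congr rfl fun t _ => Finset.sum_congr rfl fun u _ => ?_
  ring

private lemma integrable_hMN (hmeas : ∀ i, Measurable fun x => φ x i)
    (hbd : ∀ x i, |φ x i| ≤ C) (A B : Matrix n n ℝ) :
    Integrable (fun q : Ω × Ω =>
      (φ q.1 ⬝ᵥ A.mulVec (φ q.2)) * (φ q.1 ⬝ᵥ B.mulVec (φ q.2))) (μ.prod μ) := by
  have : (fun q : Ω × Ω => (φ q.1 ⬝ᵥ A.mulVec (φ q.2)) * (φ q.1 ⬝ᵥ B.mulVec (φ q.2)))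
      = fun q => ∑ v : (n × n) × (n × n), A v.1.1 v.1.2 * B v.2.1 v.2.2 *
          ((φ q.1 v.1.1 * φ q.1 v.2.1) * (φ q.2 v.1.2 * φ q.2 v.2.2)) :=
    funext fun q => expand_prod A B q
  rw [this]
  exact integrable_finset_sum _ fun v _ =>
    (((int_mul hmeas hbd v.1.1 v.2.1).mul_prod (int_mul hmeas hbd v.1.2 v.2.2))).const_mul _

private lemma sum_GMG (G M : Matrix n n ℝ) (hGsym : ∀ i j, G i j = G j i) (i j : n) :
    ∑ u : n × n, M u.1 u.2 * (G i u.1 * G j u.2) = (G * M * G) i j := by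
  rw [Fintype.sum_prod_type]
  calc ∑ r, ∑ s, M r s * (G i r * G j s)
      = ∑ s, ∑ r, G i r * M r s * G s j := by
        rw [Finset.sum_comm]
        exact Finset.sum_congr rfl fun s _ => Finset.sum_congr rfl fun r _ => by
          rw [hGsym j s]; ring
    _ = (G * M * G) i j := by
        simp only [Matrix.mul_apply, Finset.sum_mul]

private lemma master_sq (hmeas : ∀ i, Measurable fun x => φ x i)
    (hbd : ∀ x i, |φ x i| ≤ C) (G : Matrix n n ℝ)
    (hG : ∀ i j, G i j = ∫ x, φ x i * φ x j ∂μ) (hGsym : ∀ i j, G i j = G j i)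
    (M : Matrix n n ℝ) :
    ∫ q, (φ q.1 ⬝ᵥ M.mulVec (φ q.2)) * (φ q.1 ⬝ᵥ M.mulVec (φ q.2)) ∂(μ.prod μ)
      = ∑ t : n × n, M t.1 t.2 * (G * M * G) t.1 t.2 := by
  rw [master hmeas hbd G hG M M, Fintype.sum_prod_type]
  refine Finset.sum_congr rfl fun t _ => ?_
  rw [← sum_GMG G M hGsym t.1 t.2, Finset.mul_sum]
  exact Finset.sum_congr rfl fun u _ => by ring

private lemma ae_iff_GMG (hmeas : ∀ i, Measurable fun x => φ x i)
    (hbd : ∀ x i, |φ x i| ≤ C) (G : Matrix n n ℝ)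
    (hG : ∀ i j, G i j = ∫ x, φ x i * φ x j ∂μ) (hGsym : ∀ i j, G i j = G j i)
    (M : Matrix n n ℝ) :
    (∀ᵐ q ∂(μ.prod μ), φ q.1 ⬝ᵥ M.mulVec (φ q.2) = 0) ↔ G * M * G = 0 := by
  constructor
  · intro h
    ext r s
    rw [Matrix.zero_apply]
    have h1 := master hmeas hbd G hG (Matrix.of fun a b =>
      (if a = r then (1:ℝ) else 0) * (if b = s then (1:ℝ) else 0)) M
    have h2 : ∫ q, (φ q.1 ⬝ᵥ (Matrix.of fun a b =>
        (if a = r then (1:ℝ) else 0) * (if b = s then (1:ℝ) else 0)).mulVec (φ q.2)) *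
        (φ q.1 ⬝ᵥ M.mulVec (φ q.2)) ∂(μ.prod μ) = 0 := by
      rw [show (0:ℝ) = ∫ _ : Ω × Ω, (0:ℝ) ∂(μ.prod μ) by rw [integral_zero]]
      refine integral_congr_ae ?_
      filter_upwards [h] with q hq
      rw [hq, mul_zero]
    rw [h2] at h1
    rw [← sum_GMG G M hGsym r s, h1]
    simp only [Fintype.sum_prod_type, Matrix.of_apply, ite_mul, one_mul, zero_mul,
      mul_ite, mul_zero, Finset.sum_ite_irrel, Finset.sum_const_zero, Finset.sum_ite_eq', Finset.mem_univ, if_true]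
  · intro h
    have h0 : ∫ q, (φ q.1 ⬝ᵥ M.mulVec (φ q.2)) * (φ q.1 ⬝ᵥ M.mulVec (φ q.2)) ∂(μ.prod μ) = 0 := by
      rw [master_sq hmeas hbd G hG hGsym M, h]
      simp
    have hae := (integral_eq_zero_iff_of_nonneg (fun q => mul_self_nonneg _)
      (integrable_hMN hmeas hbd M M)).mp h0
    filter_upwards [hae] with q hq
    exact mul_self_eq_zero.mp hq

private lemma G_psd (hmeas : ∀ i, Measurable fun x => φ x i)
    (hbd : ∀ x i, |φ x i| ≤ C) (G : Matrix n n ℝ)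
    (hG : ∀ i j, G i j = ∫ x, φ x i * φ x j ∂μ) : G.PosSemidef := by
  have hGsym : ∀ i j, G i j = G j i := by
    intro i j
    rw [hG, hG]
    exact integral_congr_ae (ae_of_all _ fun x => mul_comm _ _)
  refine .of_dotProduct_mulVec_nonneg ?_ ?_
  · ext i j
    rw [conjTranspose_apply, star_trivial]
    exact hGsym j i
  · intro x
    have hstar : star x = x := by
      funext i
      simp
    have e1 : star x ⬝ᵥ G.mulVec x = ∑ t : n × n, x t.1 * x t.2 * G t.1 t.2 := by
      rw [hstar, dv_expand G x x]
      exact Finset.sum_congr rfl fun t _ => by ring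
    have e3 : star x ⬝ᵥ G.mulVec x
        = ∫ ω, ∑ t : n × n, x t.1 * x t.2 * (φ ω t.1 * φ ω t.2) ∂μ := by
      rw [e1, integral_finset_sum _ fun (t : n × n) _ =>
        (int_mul hmeas hbd t.1 t.2).const_mul (x t.1 * x t.2)]
      refine Finset.sum_congr rfl fun t _ => ?_
      rw [hG, integral_const_mul]
    rw [e3]
    refine integral_nonneg fun ω => ?_
    have hsq : ∑ t : n × n, x t.1 * x t.2 * (φ ω t.1 * φ ω t.2)
        = (∑ i, x i * φ ω i) * (∑ i, x i * φ ω i) := by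
      rw [Finset.sum_mul_sum Finset.univ Finset.univ
        (fun i => x i * φ ω i) (fun i => x i * φ ω i)]
      conv_lhs => rw [Fintype.sum_prod_type]
      exact Finset.sum_congr rfl fun a _ => Finset.sum_congr rfl fun b _ => by ring
    rw [hsq]
    exact mul_self_nonneg _

end analytic


private lemma coord_le_norm {d : ℕ} (v : EuclideanSpace ℝ (Fin d)) (i : Fin d) :
    |v i| ≤ ‖v‖ := by
  rw [EuclideanSpace.norm_eq]
  calc |v i| = Real.sqrt (‖v i‖ ^ 2) := by
        rw [Real.norm_eq_abs, Real.sqrt_sq_eq_abs, abs_abs]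
    _ ≤ Real.sqrt (∑ j, ‖v j‖ ^ 2) :=
        Real.sqrt_le_sqrt (Finset.single_le_sum (f := fun j => ‖v j‖ ^ 2) (fun j _ => sq_nonneg _) (Finset.mem_univ i))

theorem stmt_4 {Ω : Type*} [MeasurableSpace Ω] (μ : Measure Ω) [IsProbabilityMeasure μ]
    (lam : ℝ) (hlam : 0 < lam)
    {m p : ℕ} (k : Ω → EuclideanSpace ℝ (Fin m)) (l : Ω → EuclideanSpace ℝ (Fin p))
    (hk : Measurable k) (hl : Measurable l)
    (hkbd : ∃ C, ∀ x, ‖k x‖ ≤ C) (hlbd : ∃ C, ∀ x, ‖l x‖ ≤ C)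
    (Sk : Matrix (Fin m) (Fin m) ℝ) (hSk : ∀ i j, Sk i j = ∫ x, k x i * k x j ∂μ)
    (Sl : Matrix (Fin p) (Fin p) ℝ) (hSl : ∀ i j, Sl i j = ∫ x, l x i * l x j ∂μ) :
    (∫ x, ∫ x', ((fun i => k x i) ⬝ᵥ (Sk + lam • 1)⁻¹.mulVec (fun i => k x' i)
        - (fun i => l x i) ⬝ᵥ (Sl + lam • 1)⁻¹.mulVec (fun i => l x' i)) ^ 2 ∂μ ∂μ) = 0 ↔
      ∀ᵐ q ∂(μ.prod μ), ⟪k q.1, k q.2⟫ = ⟪l q.1, l q.2⟫ := by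
  classical
  obtain ⟨Ck, hCk⟩ := hkbd
  obtain ⟨Cl, hCl⟩ := hlbd
  let φ : Ω → (Fin m ⊕ Fin p) → ℝ := fun x => Sum.elim (fun i => k x i) (fun j => l x j)
  have hmeasφ : ∀ i, Measurable fun x => φ x i := by
    rintro (i | j)
    · exact (measurable_pi_apply i).comp ((WithLp.measurable_ofLp 2 _).comp hk)
    · exact (measurable_pi_apply j).comp ((WithLp.measurable_ofLp 2 _).comp hl)
  have hbdφ : ∀ x i, |φ x i| ≤ max Ck Cl := by
    rintro x (i | j)
    · exact le_trans (coord_le_norm (k x) i) (le_trans (hCk x) (le_max_left _ _))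
    · exact le_trans (coord_le_norm (l x) j) (le_trans (hCl x) (le_max_right _ _))
  let G : Matrix (Fin m ⊕ Fin p) (Fin m ⊕ Fin p) ℝ :=
    Matrix.of fun i j => ∫ x, φ x i * φ x j ∂μ
  have hGdef : ∀ i j, G i j = ∫ x, φ x i * φ x j ∂μ := fun i j => rfl
  have hGsym : ∀ i j, G i j = G j i := fun i j => by
    rw [hGdef, hGdef]
    exact integral_congr_ae (ae_of_all _ fun x => mul_comm _ _)
  have hGpsd : G.PosSemidef := G_psd hmeasφ hbdφ G hGdef
  have hSk' : ∀ i j, Sk i j = G (Sum.inl i) (Sum.inl j) := fun i j => by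
    rw [hSk, hGdef]; rfl
  have hSl' : ∀ i j, Sl i j = G (Sum.inr i) (Sum.inr j) := fun i j => by
    rw [hSl, hGdef]; rfl
  have hh1 : ∀ x x' : Ω, (fun i => k x i) ⬝ᵥ (Sk + lam • 1)⁻¹.mulVec (fun i => k x' i)
      - (fun i => l x i) ⬝ᵥ (Sl + lam • 1)⁻¹.mulVec (fun i => l x' i)
      = φ x ⬝ᵥ (fromBlocks (Sk + lam • 1)⁻¹ 0 0 (-(Sl + lam • 1)⁻¹)).mulVec (φ x') := by
    intro x x'
    have hmv : (fromBlocks (Sk + lam • 1)⁻¹ 0 0 (-(Sl + lam • 1)⁻¹)).mulVec (φ x')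
        = Sum.elim ((Sk + lam • 1)⁻¹ *ᵥ (fun i => k x' i))
            (-((Sl + lam • 1)⁻¹ *ᵥ (fun j => l x' j))) := by
      rw [fromBlocks_mulVec]
      simp only [Matrix.zero_mulVec, add_zero, zero_add, Matrix.neg_mulVec]
      rw [show φ x' ∘ Sum.inl = (fun i => k x' i) from rfl,
        show φ x' ∘ Sum.inr = (fun j => l x' j) from rfl]
    rw [hmv]
    show _ - _ = Sum.elim (fun i => k x i) (fun j => l x j) ⬝ᵥ _
    rw [sumElim_dotProduct_sumElim, dotProduct_neg]
    ring
  have hh2 : ∀ q : Ω × Ω, (⟪k q.1, k q.2⟫) - (⟪l q.1, l q.2⟫)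
      = φ q.1 ⬝ᵥ (fromBlocks (1 : Matrix (Fin m) (Fin m) ℝ) 0 0
          (-(1 : Matrix (Fin p) (Fin p) ℝ))).mulVec (φ q.2) := by
    intro q
    have hmv : (fromBlocks (1 : Matrix (Fin m) (Fin m) ℝ) 0 0
          (-(1 : Matrix (Fin p) (Fin p) ℝ))).mulVec (φ q.2)
        = Sum.elim (fun i => k q.2 i) (-(fun j => l q.2 j)) := by
      rw [fromBlocks_mulVec]
      simp only [Matrix.zero_mulVec, add_zero, zero_add, Matrix.neg_mulVec, Matrix.one_mulVec]
      rw [show φ q.2 ∘ Sum.inl = (fun i => k q.2 i) from rfl,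
        show φ q.2 ∘ Sum.inr = (fun j => l q.2 j) from rfl]
    rw [hmv]
    show _ - _ = Sum.elim (fun i => k q.1 i) (fun j => l q.1 j) ⬝ᵥ _
    rw [sumElim_dotProduct_sumElim, dotProduct_neg]
    have hik : (⟪k q.1, k q.2⟫) = (fun i => k q.1 i) ⬝ᵥ (fun i => k q.2 i) := by
      simp [PiLp.inner_apply, RCLike.inner_apply, dotProduct, mul_comm]
    have hil : (⟪l q.1, l q.2⟫) = (fun j => l q.1 j) ⬝ᵥ (fun j => l q.2 j) := by
      simp [PiLp.inner_apply, RCLike.inner_apply, dotProduct, mul_comm]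
    rw [hik, hil]
    ring
  have hint1 := integrable_hMN (μ := μ) hmeasφ hbdφ
    (fromBlocks (Sk + lam • 1)⁻¹ 0 0 (-(Sl + lam • 1)⁻¹))
    (fromBlocks (Sk + lam • 1)⁻¹ 0 0 (-(Sl + lam • 1)⁻¹))
  have lhs_eq : (∫ x, ∫ x', ((fun i => k x i) ⬝ᵥ (Sk + lam • 1)⁻¹.mulVec (fun i => k x' i)
        - (fun i => l x i) ⬝ᵥ (Sl + lam • 1)⁻¹.mulVec (fun i => l x' i)) ^ 2 ∂μ ∂μ)
      = ∫ q, (φ q.1 ⬝ᵥ (fromBlocks (Sk + lam • 1)⁻¹ 0 0 (-(Sl + lam • 1)⁻¹)).mulVec (φ q.2)) *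
          (φ q.1 ⬝ᵥ (fromBlocks (Sk + lam • 1)⁻¹ 0 0 (-(Sl + lam • 1)⁻¹)).mulVec (φ q.2))
          ∂(μ.prod μ) := by
    calc (∫ x, ∫ x', ((fun i => k x i) ⬝ᵥ (Sk + lam • 1)⁻¹.mulVec (fun i => k x' i)
        - (fun i => l x i) ⬝ᵥ (Sl + lam • 1)⁻¹.mulVec (fun i => l x' i)) ^ 2 ∂μ ∂μ)
        = ∫ x, ∫ x', (φ x ⬝ᵥ (fromBlocks (Sk + lam • 1)⁻¹ 0 0 (-(Sl + lam • 1)⁻¹)).mulVec (φ x')) *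
            (φ x ⬝ᵥ (fromBlocks (Sk + lam • 1)⁻¹ 0 0 (-(Sl + lam • 1)⁻¹)).mulVec (φ x')) ∂μ ∂μ := by
          refine integral_congr_ae (ae_of_all _ fun x => ?_)
          refine integral_congr_ae (ae_of_all _ fun x' => ?_)
          dsimp only
          rw [← hh1 x x', pow_two]
      _ = _ := MeasureTheory.integral_integral hint1
  rw [lhs_eq,
    integral_eq_zero_iff_of_nonneg (fun q => mul_self_nonneg _) hint1]
  have step1 : ((fun q : Ω × Ω =>
        (φ q.1 ⬝ᵥ (fromBlocks (Sk + lam • 1)⁻¹ 0 0 (-(Sl + lam • 1)⁻¹)).mulVec (φ q.2)) *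
        (φ q.1 ⬝ᵥ (fromBlocks (Sk + lam • 1)⁻¹ 0 0 (-(Sl + lam • 1)⁻¹)).mulVec (φ q.2)))
        =ᵐ[μ.prod μ] 0)
      ↔ ∀ᵐ q ∂(μ.prod μ),
          φ q.1 ⬝ᵥ (fromBlocks (Sk + lam • 1)⁻¹ 0 0 (-(Sl + lam • 1)⁻¹)).mulVec (φ q.2) = 0 := by
    constructor <;> intro h' <;> filter_upwards [h'] with q hq
    · exact mul_self_eq_zero.mp hq
    · show _ * _ = (0 : Ω × Ω → ℝ) q
      rw [hq]
      simp
  rw [step1, ae_iff_GMG hmeasφ hbdφ G hGdef hGsym _,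
    matrix_key lam hlam G hGpsd Sk Sl hSk' hSl',
    ← ae_iff_GMG hmeasφ hbdφ G hGdef hGsym (fromBlocks (1 : Matrix (Fin m) (Fin m) ℝ) 0 0
      (-(1 : Matrix (Fin p) (Fin p) ℝ)))]
  refine Filter.eventually_congr (ae_of_all _ fun q => ?_)
  rw [← hh2 q, sub_eq_zero]
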